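/- Let (N,v) be a TU game with veto player a (v(S)=0 whenever a ∉ S) and let ε ≥ 0. The following are equivalent: (i) the strong ε-core is nonempty; (ii) the allocation x with x_i = ε for i ≠ a and x_a = v(N) − ε(|N|−1) is in the strong ε-core; (iii) ε ≤ (v(N) − v(S)) / (|N| − |S| + 1) for every proper coalition S containing a. -/
import Mathlib


open Finset

/-- The strong ε-core of a TU game. -/
def epsCore {ι : Type*} [Fintype ι] [DecidableEq ι] (v : Finset ι → ℝ) (ε : ℝ) :
    Set (ι → ℝ) :=
  {x | (∑ i, x i) = v Finset.univ ∧
    ∀ S : Finset ι, S.Nonempty → S ≠ Finset.univ → v S + ε ≤ ∑ i ∈ S, x i}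

theorem sum_aux {ι : Type*} [Fintype ι] [DecidableEq ι] (v : Finset ι → ℝ) (a : ι)
    (ε : ℝ) (S : Finset ι) (haS : a ∈ S) :
    ∑ i ∈ S, (fun i => if i = a then v Finset.univ - ε * ((Fintype.card ι : ℝ) - 1) else ε) i
      = v Finset.univ - ε * ((Fintype.card ι : ℝ) - 1) + ε * ((S.card : ℝ) - 1) := by
  rw [← Finset.add_sum_erase _ _ haS]
  simp only [if_pos rfl]
  congr 1
  rw [Finset.sum_ite_of_false, Finset.sum_const, Finset.card_erase_of_mem haS]
  · rw [nsmul_eq_mul, mul_comm]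
    congr 1
    have : 1 ≤ S.card := Finset.card_pos.mpr ⟨a, haS⟩
    push_cast [Nat.cast_sub this]
    ring
  · intro i hi
    exact Finset.ne_of_mem_erase hi

/-- For a veto game with veto player `a` and `ε ≥ 0`, the following are equivalent:
(i) the strong ε-core is nonempty; (ii) the allocation with `x_i = ε` for `i ≠ a`
and `x_a = v(N) − ε(|N|−1)` is in the strong ε-core;
(iii) `ε ≤ (v(N) − v(S))/(|N| − |S| + 1)` for every proper coalition `S` containing `a`. -/
theorem stmt3 {ι : Type*} [Fintype ι] [DecidableEq ι] (v : Finset ι → ℝ) (a : ι)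
    (hcard : 2 ≤ Fintype.card ι)
    (hempty : v ∅ = 0)
    (hveto : ∀ S : Finset ι, a ∉ S → v S = 0)
    (ε : ℝ) (hε : 0 ≤ ε) :
    ((epsCore v ε).Nonempty ↔
      (fun i => if i = a then v Finset.univ - ε * ((Fintype.card ι : ℝ) - 1) else ε)
        ∈ epsCore v ε) ∧
    ((fun i => if i = a then v Finset.univ - ε * ((Fintype.card ι : ℝ) - 1) else ε)
        ∈ epsCore v ε ↔
      ∀ S : Finset ι, S.Nonempty → S ≠ Finset.univ → a ∈ S →
        ε ≤ (v Finset.univ - v S) / ((Fintype.card ι : ℝ) - (S.card : ℝ) + 1)) := by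
  set x : ι → ℝ :=
    fun i => if i = a then v Finset.univ - ε * ((Fintype.card ι : ℝ) - 1) else ε with hx
  -- cardinality facts for proper coalitions
  have hden : ∀ S : Finset ι, S ≠ Finset.univ →
      (1 : ℝ) ≤ (Fintype.card ι : ℝ) - (S.card : ℝ) := by
    intro S hS
    have h1 : S.card < Fintype.card ι := by
      rw [← Finset.card_univ]
      exact Finset.card_lt_card (Finset.ssubset_univ_iff.mpr hS)
    have : (S.card : ℝ) + 1 ≤ (Fintype.card ι : ℝ) := by exact_mod_cast h1
    linarith
  -- (iii) → (ii)
  have h32 : (∀ S : Finset ι, S.Nonempty → S ≠ Finset.univ → a ∈ S →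
        ε ≤ (v Finset.univ - v S) / ((Fintype.card ι : ℝ) - (S.card : ℝ) + 1)) →
      x ∈ epsCore v ε := by
    intro h3
    constructor
    · have := sum_aux v a ε Finset.univ (Finset.mem_univ a)
      rw [hx, this, Finset.card_univ]
      ring
    · intro S hSne hSuniv
      by_cases haS : a ∈ S
      · have hsum := sum_aux v a ε S haS
        rw [hx, hsum]
        have hd := hden S hSuniv
        have h3S := h3 S hSne hSuniv haS
        rw [le_div_iff₀ (by linarith)] at h3S
        nlinarith
      · have hsum : ∑ i ∈ S, x i = ε * (S.card : ℝ) := by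
          rw [hx, Finset.sum_ite_of_false (fun i hi => by rintro rfl; exact haS hi),
            Finset.sum_const, nsmul_eq_mul, mul_comm]
        rw [hsum, hveto S haS]
        have h1 : 1 ≤ S.card := Finset.card_pos.mpr hSne
        have : (1 : ℝ) ≤ (S.card : ℝ) := by exact_mod_cast h1
        nlinarith
  -- (ii) → (iii)
  have h23 : x ∈ epsCore v ε →
      (∀ S : Finset ι, S.Nonempty → S ≠ Finset.univ → a ∈ S →
        ε ≤ (v Finset.univ - v S) / ((Fintype.card ι : ℝ) - (S.card : ℝ) + 1)) := by
    intro hxc S hSne hSuniv haS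
    have hineq := hxc.2 S hSne hSuniv
    have hsum := sum_aux v a ε S haS
    rw [← hx] at hsum
    rw [hsum] at hineq
    have hd := hden S hSuniv
    rw [le_div_iff₀ (by linarith)]
    nlinarith
  -- (i) → (iii)
  have h13 : (epsCore v ε).Nonempty →
      (∀ S : Finset ι, S.Nonempty → S ≠ Finset.univ → a ∈ S →
        ε ≤ (v Finset.univ - v S) / ((Fintype.card ι : ℝ) - (S.card : ℝ) + 1)) := by
    rintro ⟨y, hy⟩ S hSne hSuniv haS
    have hTne : (Finset.univ \ S).Nonempty := by
      rw [Finset.sdiff_nonempty]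
      intro h
      exact hSuniv (Finset.eq_univ_iff_forall.mpr fun i => h (Finset.mem_univ i))
    -- each i outside S gets at least ε
    have hsing : ∀ i ∈ Finset.univ \ S, ε ≤ y i := by
      intro i hi
      have hia : i ≠ a := by
        rintro rfl
        exact (Finset.mem_sdiff.mp hi).2 haS
      have hne : ({i} : Finset ι) ≠ Finset.univ := by
        intro h
        have := Finset.card_univ (α := ι)
        rw [← h, Finset.card_singleton] at this
        omega
      have := hy.2 {i} (Finset.singleton_nonempty i) hne
      rw [hveto {i} (by simp [Ne.symm hia]), Finset.sum_singleton] at this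
      linarith
    have hT : ε * ((Finset.univ \ S).card : ℝ) ≤ ∑ i ∈ Finset.univ \ S, y i := by
      calc ε * ((Finset.univ \ S).card : ℝ)
          = ∑ _i ∈ Finset.univ \ S, ε := by
            rw [Finset.sum_const, nsmul_eq_mul, mul_comm]
        _ ≤ ∑ i ∈ Finset.univ \ S, y i := Finset.sum_le_sum hsing
    have hsplit : ∑ i ∈ Finset.univ \ S, y i + ∑ i ∈ S, y i = v Finset.univ := by
      rw [Finset.sum_sdiff (Finset.subset_univ S), hy.1]
    have hScore := hy.2 S hSne hSuniv
    have hcardT : ((Finset.univ \ S).card : ℝ)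
        = (Fintype.card ι : ℝ) - (S.card : ℝ) := by
      rw [Finset.card_sdiff_of_subset (Finset.subset_univ S), Finset.card_univ]
      have : S.card ≤ Fintype.card ι := Finset.card_le_univ S
      push_cast [Nat.cast_sub this]
      ring
    rw [hcardT] at hT
    have hd := hden S hSuniv
    rw [le_div_iff₀ (by linarith)]
    nlinarith
  constructor
  · exact ⟨fun h => h32 (h13 h), fun h => ⟨x, h⟩⟩
  · exact ⟨h23, h32⟩
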